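/- Let h : ℝ^n → ℝ be a convex function and let ε ∈ (0,1). Then the function g(x, λ) = ((1−ε)λ + ε)·h( x / ((1−ε)λ + ε) ) − ε·h(0)·(1−λ) is convex on ℝ^n × [0,1]. Moreover g(x, 1) = h(x) for all x ∈ ℝ^n. -/

import Mathlib

/-- For a convex function `h : ℝⁿ → ℝ` and `ε ∈ (0,1)`, the
ε-approximation of the closure of the perspective of `h`,
`g (x, λ) = ((1-ε)λ + ε) · h (x / ((1-ε)λ + ε)) - ε · h 0 · (1 - λ)`,
is convex on `ℝⁿ × [0,1]` and satisfies `g (x, 1) = h x`. -/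
theorem eps_approx_perspective_convexOn
    {n : ℕ} (h : (Fin n → ℝ) → ℝ)
    (hconv : ConvexOn ℝ Set.univ h)
    (ε : ℝ) (hε : ε ∈ Set.Ioo (0 : ℝ) 1) :
    ConvexOn ℝ (Set.univ ×ˢ Set.Icc (0 : ℝ) 1)
      (fun p : (Fin n → ℝ) × ℝ =>
        ((1 - ε) * p.2 + ε) * h (((1 - ε) * p.2 + ε)⁻¹ • p.1)
          - ε * h 0 * (1 - p.2)) ∧
    ∀ x : Fin n → ℝ,
      ((1 - ε) * (1 : ℝ) + ε) * h (((1 - ε) * (1 : ℝ) + ε)⁻¹ • x)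
          - ε * h 0 * (1 - (1 : ℝ)) = h x := by
  obtain ⟨hε0, hε1⟩ := hε
  constructor
  · refine ⟨(convex_univ).prod (convex_Icc 0 1), ?_⟩
    rintro ⟨x₁, l₁⟩ ⟨-, hl₁⟩ ⟨x₂, l₂⟩ ⟨-, hl₂⟩ a b ha hb hab
    set t₁ : ℝ := (1 - ε) * l₁ + ε with ht₁def
    set t₂ : ℝ := (1 - ε) * l₂ + ε with ht₂def
    have ht₁ : 0 < t₁ := by
      have : 0 ≤ (1 - ε) * l₁ := mul_nonneg (by linarith) hl₁.1
      linarith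
    have ht₂ : 0 < t₂ := by
      have : 0 ≤ (1 - ε) * l₂ := mul_nonneg (by linarith) hl₂.1
      linarith
    set T : ℝ := a * t₁ + b * t₂ with hTdef
    have hT : 0 < T := by
      rcases eq_or_lt_of_le ha with rfl | ha'
      · simp only [zero_mul, zero_add, hTdef]
        nlinarith
      · nlinarith
    have hTeq : (1 - ε) * (a * l₁ + b * l₂) + ε = T := by
      simp only [hTdef, ht₁def, ht₂def]; nlinarith [hab]
    simp only [Prod.smul_mk, Prod.mk_add_mk, smul_eq_mul]
    rw [hTeq]
    -- key convexity step
    have hkey : h (T⁻¹ • (a • x₁ + b • x₂))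
        ≤ (a * t₁ / T) * h (t₁⁻¹ • x₁) + (b * t₂ / T) * h (t₂⁻¹ • x₂) := by
      have hsum : a * t₁ / T + b * t₂ / T = 1 := by
        field_simp
        exact hTdef.symm
      have harg : (a * t₁ / T) • (t₁⁻¹ • x₁) + (b * t₂ / T) • (t₂⁻¹ • x₂)
          = T⁻¹ • (a • x₁ + b • x₂) := by
        rw [smul_smul, smul_smul, smul_add, smul_smul, smul_smul]
        congr 1
        · congr 1; field_simp
        · congr 1; field_simp
      have := hconv.2 (Set.mem_univ (t₁⁻¹ • x₁)) (Set.mem_univ (t₂⁻¹ • x₂))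
        (div_nonneg (mul_nonneg ha ht₁.le) hT.le)
        (div_nonneg (mul_nonneg hb ht₂.le) hT.le) hsum
      rwa [harg, smul_eq_mul, smul_eq_mul] at this
    have := mul_le_mul_of_nonneg_left hkey hT.le
    have hexp : T * ((a * t₁ / T) * h (t₁⁻¹ • x₁) + (b * t₂ / T) * h (t₂⁻¹ • x₂))
        = a * (t₁ * h (t₁⁻¹ • x₁)) + b * (t₂ * h (t₂⁻¹ • x₂)) := by
      field_simp
    rw [hexp] at this
    have haff : ε * h 0 * (1 - (a * l₁ + b * l₂))
        = a * (ε * h 0 * (1 - l₁)) + b * (ε * h 0 * (1 - l₂)) := by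
      linear_combination (-(ε * h 0)) * hab
    linarith
  · intro x
    have : (1 - ε) * (1 : ℝ) + ε = 1 := by ring
    rw [this]
    simp
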